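/- arXiv:1511.04626 — 2 statements merged into one kernel-verified Lean document; each statement's English description precedes it below -/
import Mathlib

section
/- Suppose there exists a measurable set Λ_α ⊆ Λ with Lebesgue measure strictly greater than α such that the p-value test is consistent on Λ_α, i.e. ℙ(p_n(λ) < α) → 1 as n → ∞ for every λ ∈ Λ_α. Then the PVOT test is consistent: ℙ(𝓟ₙ*(α) > α) → 1 as n → ∞. -/
open MeasureTheory ProbabilityTheory Filter

set_option maxHeartbeats 2000000

/-- If the p-value test is consistent on a subset of Λ of Lebesgue measure strictly
greater than α, then the PVOT test is consistent. -/
theorem pvot_test_consistent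
    {Ω : Type*} [MeasurableSpace Ω] (Pr : Measure Ω) [IsProbabilityMeasure Pr]
    {k : ℕ} (Λ : Set (Fin k → ℝ)) (hΛ : MeasurableSet Λ) (hΛ1 : volume Λ = 1)
    (p : ℕ → (Fin k → ℝ) → Ω → ℝ)
    (hp_meas : ∀ n, Measurable (fun q : (Fin k → ℝ) × Ω => p n q.1 q.2))
    (hp01 : ∀ n lam ω, p n lam ω ∈ Set.Icc (0 : ℝ) 1)
    (α : ℝ) (hα : α ∈ Set.Ioo (0 : ℝ) 1)
    (Λα : Set (Fin k → ℝ)) (hΛα_meas : MeasurableSet Λα) (hΛα_sub : Λα ⊆ Λ)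
    (hΛα_big : ENNReal.ofReal α < volume Λα)
    (hconsistent : ∀ lam ∈ Λα,
      Tendsto (fun n => Pr {ω | p n lam ω < α}) atTop (nhds 1)) :
    Tendsto (fun n => Pr {ω | α < ∫ lam in Λ, (if p n lam ω < α then (1 : ℝ) else 0)})
      atTop (nhds 1) := by
  obtain ⟨hα0, hα1⟩ := hα
  -- basic facts about measures
  have hΛfin : volume Λ ≠ ⊤ := by rw [hΛ1]; exact ENNReal.one_ne_top
  have hΛαle : volume Λα ≤ 1 := hΛ1 ▸ measure_mono hΛα_sub
  have hΛαfin : volume Λα ≠ ⊤ := (hΛαle.trans_lt ENNReal.one_lt_top).ne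
  set c : ℝ := (volume Λα).toReal with hc
  have hαc : α < c := by
    have := (ENNReal.toReal_lt_toReal (by simp) hΛαfin).mpr hΛα_big
    rwa [ENNReal.toReal_ofReal hα0.le] at this
  -- measurability of the indicator sets
  have hSlt : ∀ n, MeasurableSet {q : (Fin k → ℝ) × Ω | p n q.1 q.2 < α} :=
    fun n => measurableSet_lt (hp_meas n) measurable_const
  have hSge : ∀ n, MeasurableSet {q : (Fin k → ℝ) × Ω | α ≤ p n q.1 q.2} :=
    fun n => measurableSet_le measurable_const (hp_meas n)
  have hglt : ∀ n, Measurable (fun q : (Fin k → ℝ) × Ω =>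
      if p n q.1 q.2 < α then (1 : ℝ) else 0) :=
    fun n => Measurable.ite (hSlt n) measurable_const measurable_const
  have hgge : ∀ n, Measurable (fun q : (Fin k → ℝ) × Ω =>
      if α ≤ p n q.1 q.2 then (1 : ℝ) else 0) :=
    fun n => Measurable.ite (hSge n) measurable_const measurable_const
  -- integrability of sections
  have hint : ∀ (n : ℕ) (ω : Ω) (S : Set (Fin k → ℝ)), volume S ≠ ⊤ →
      ∀ (f : (Fin k → ℝ) × Ω → ℝ), Measurable f → (∀ q, |f q| ≤ 1) →
      IntegrableOn (fun lam => f (lam, ω)) S volume := by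
    intro n ω S hS f hf hb
    refine Integrable.mono' (g := fun _ => (1:ℝ)) ?_ ?_ ?_
    · exact (integrableOn_const_iff (C := (1:ℝ))).mpr (Or.inr hS.lt_top)
    · exact (hf.comp (measurable_id.prodMk measurable_const)).aestronglyMeasurable
    · exact ae_of_all _ fun lam => by simpa using hb (lam, ω)
  have hbd_lt : ∀ n (q : (Fin k → ℝ) × Ω),
      |if p n q.1 q.2 < α then (1:ℝ) else 0| ≤ 1 := by
    intro n q; split <;> simp
  have hbd_ge : ∀ n (q : (Fin k → ℝ) × Ω),
      |if α ≤ p n q.1 q.2 then (1:ℝ) else 0| ≤ 1 := by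
    intro n q; split <;> simp
  -- the occupation time and the complementary integral
  set O : ℕ → Ω → ℝ := fun n ω => ∫ lam in Λ, (if p n lam ω < α then (1 : ℝ) else 0)
    with hO
  set f : ℕ → Ω → ℝ := fun n ω => ∫ lam in Λα, (if α ≤ p n lam ω then (1 : ℝ) else 0)
    with hf
  have hf_nonneg : ∀ n ω, 0 ≤ f n ω := by
    intro n ω
    refine integral_nonneg fun lam => ?_
    split <;> norm_num
  -- key pointwise bound : c - f n ω ≤ O n ω
  have hkey : ∀ n ω, c - f n ω ≤ O n ω := by
    intro n ω
    have h1 : ∫ lam in Λα, (if p n lam ω < α then (1:ℝ) else 0) ≤ O n ω := by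
      refine setIntegral_mono_set
        (hint n ω Λ hΛfin _ (hglt n) (hbd_lt n))
        (ae_of_all _ fun lam => by dsimp only; split <;> norm_num)
        (HasSubset.Subset.eventuallyLE hΛα_sub)
    have h2 : ∫ lam in Λα, (if p n lam ω < α then (1:ℝ) else 0) = c - f n ω := by
      have : (fun lam => if p n lam ω < α then (1:ℝ) else 0)
          = fun lam => 1 - (if α ≤ p n lam ω then (1:ℝ) else 0) := by
        funext lam
        rcases lt_or_ge (p n lam ω) α with h | h
        · simp [h, not_le.mpr h]
        · simp [h, not_lt.mpr h]
      rw [this, integral_sub ((integrableOn_const_iff (C := (1:ℝ))).mpr (Or.inr hΛαfin.lt_top))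
        (hint n ω Λα hΛαfin _ (hgge n) (hbd_ge n))]
      simp [hc, Measure.real]
      rfl
    linarith [h1, h2 ▸ h1]
  -- measurability of f n and O n in ω
  have hf_meas : ∀ n, Measurable (f n) := by
    intro n
    have := ((hgge n).stronglyMeasurable).integral_prod_left'
      (μ := volume.restrict Λα)
    exact this.measurable
  have hO_meas : ∀ n, Measurable (O n) := by
    intro n
    have := ((hglt n).stronglyMeasurable).integral_prod_left'
      (μ := volume.restrict Λ)
    exact this.measurable
  -- the expected value of f n, as a lintegral
  set E : ℕ → ENNReal := fun n => ∫⁻ lam in Λα, Pr {ω | α ≤ p n lam ω} with hE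
  have hEeq : ∀ n, ∫⁻ ω, ENNReal.ofReal (f n ω) ∂Pr = E n := by
    intro n
    have h1 : ∀ ω, ENNReal.ofReal (f n ω)
        = ∫⁻ lam in Λα, ENNReal.ofReal (if α ≤ p n lam ω then (1:ℝ) else 0) := by
      intro ω
      exact ofReal_integral_eq_lintegral_ofReal
        (hint n ω Λα hΛαfin _ (hgge n) (hbd_ge n))
        (ae_of_all _ fun lam => by dsimp only; split <;> norm_num)
    simp only [h1]
    rw [lintegral_lintegral_swap]
    · refine setLIntegral_congr_fun hΛα_meas (fun lam _ => ?_)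
      have hset : MeasurableSet {ω | α ≤ p n lam ω} :=
        measurableSet_le measurable_const
          ((hp_meas n).comp (measurable_const.prodMk measurable_id))
      rw [← lintegral_indicator_one hset]
      congr 1
      funext ω
      by_cases h : α ≤ p n lam ω <;> simp [h, Set.indicator_apply]
    · refine Measurable.aemeasurable ?_
      apply Measurable.ennreal_ofReal
      exact (hgge n).comp (measurable_swap)
  -- E n → 0
  have hE0 : Tendsto E atTop (nhds 0) := by
    have hvol : (volume.restrict Λα) Set.univ ≠ ⊤ := by
      rw [Measure.restrict_apply_univ]; exact hΛαfin
    have := tendsto_lintegral_of_dominated_convergence (μ := volume.restrict Λα)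
      (F := fun n lam => Pr {ω | α ≤ p n lam ω}) (f := fun _ => 0)
      (bound := fun _ => 1)
      (fun n => measurable_measure_prodMk_left (hSge n))
      (fun n => ae_of_all _ fun lam => prob_le_one)
      (by rw [lintegral_one]; exact hvol.lt_top.ne)
      ?_
    · simpa using this
    · refine (ae_restrict_iff' hΛα_meas).2 (ae_of_all _ fun lam hlam => ?_)
      have hset : ∀ n, MeasurableSet {ω | p n lam ω < α} := fun n =>
        measurableSet_lt ((hp_meas n).comp (measurable_const.prodMk measurable_id))
          measurable_const
      have heq : ∀ n, Pr {ω | α ≤ p n lam ω} = 1 - Pr {ω | p n lam ω < α} := by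
        intro n
        have : {ω | α ≤ p n lam ω} = {ω | p n lam ω < α}ᶜ := by
          ext ω; simp [not_lt]
        rw [this, prob_compl_eq_one_sub (hset n)]
      simp only [heq]
      have := ENNReal.Tendsto.sub (tendsto_const_nhds (x := (1:ENNReal)))
        (hconsistent lam hlam) (Or.inl ENNReal.one_ne_top)
      simpa using this
  -- Markov's inequality
  set ε : ENNReal := ENNReal.ofReal (c - α) with hε
  have hε0 : ε ≠ 0 := by
    simp [hε, ENNReal.ofReal_eq_zero, not_le, sub_pos, hαc]
  have hεtop : ε ≠ ⊤ := ENNReal.ofReal_ne_top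
  have hMarkov : ∀ n, Pr {ω | c - α ≤ f n ω} ≤ E n / ε := by
    intro n
    have hsets : {ω | c - α ≤ f n ω} = {ω | ε ≤ ENNReal.ofReal (f n ω)} := by
      ext ω
      simp only [Set.mem_setOf_eq, hε]
      rw [ENNReal.ofReal_le_ofReal_iff (hf_nonneg n ω)]
    rw [hsets, ← hEeq n]
    exact meas_ge_le_lintegral_div
      ((hf_meas n).ennreal_ofReal.aemeasurable) hε0 hεtop
  -- Pr {ω | c - α ≤ f n ω} → 0
  have htail : Tendsto (fun n => Pr {ω | c - α ≤ f n ω}) atTop (nhds 0) := by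
    have hdiv : Tendsto (fun n => E n / ε) atTop (nhds 0) := by
      have := ENNReal.Tendsto.mul_const (b := ε⁻¹) hE0
        (Or.inr (ENNReal.inv_ne_top.mpr hε0))
      simpa [div_eq_mul_inv] using this
    exact tendsto_of_tendsto_of_tendsto_of_le_of_le tendsto_const_nhds hdiv
      (fun n => zero_le) hMarkov
  -- complement bound
  have hA_meas : ∀ n, MeasurableSet {ω | α < O n ω} := fun n =>
    measurableSet_lt measurable_const (hO_meas n)
  have hcompl_sub : ∀ n, {ω | α < O n ω}ᶜ ⊆ {ω | c - α ≤ f n ω} := by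
    intro n ω hω
    simp only [Set.mem_compl_iff, Set.mem_setOf_eq, not_lt] at hω
    have := hkey n ω
    simp only [Set.mem_setOf_eq]
    linarith
  have hcompl0 : Tendsto (fun n => Pr {ω | α < O n ω}ᶜ) atTop (nhds 0) :=
    tendsto_of_tendsto_of_tendsto_of_le_of_le tendsto_const_nhds htail
      (fun n => zero_le) (fun n => measure_mono (hcompl_sub n))
  have hfinal : ∀ n, Pr {ω | α < O n ω} = 1 - Pr {ω | α < O n ω}ᶜ := by
    intro n
    rw [prob_compl_eq_one_sub (hA_meas n)]
    rw [ENNReal.sub_sub_cancel ENNReal.one_ne_top prob_le_one]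
  show Tendsto (fun n => Pr {ω | α < O n ω}) atTop (nhds 1)
  simp only [hfinal]
  have := ENNReal.Tendsto.sub (tendsto_const_nhds (x := (1:ENNReal)))
    hcompl0 (Or.inl ENNReal.one_ne_top)
  simpa using this
end

section
/- Let Λ be a measurable subset of ℝ^k with Lebesgue measure 1, let Z : Λ × Ω → ℝ be a jointly measurable stochastic process with ℙ-almost surely finite values, let c : Λ → ℝ be measurable with inf_{λ∈Λ} c(λ) ≥ c₀ for some constant c₀ > 0, and fix q > 0 and α ∈ (0,1). Then for ℙ-almost every ω, ∫_Λ 1{(Z(λ,ω) + c(λ)·b)² > q} dλ → 1 as b → ∞; consequently the probability that the occupation time exceeds the level converges to one: ℙ( ∫_Λ 1{(Z(λ) + c(λ)·b)² > q} dλ > α ) → 1 as b → ∞. -/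
open MeasureTheory ProbabilityTheory Filter

/-- If the mean-shift coefficient c(λ) is bounded below by c₀ > 0 on Λ, then the
occupation time ∫_Λ 1{(Z(λ) + c(λ)b)² > q} dλ tends to 1 almost surely as the drift
b → ∞, and consequently the probability that it exceeds the level α tends to one. -/
theorem occupation_time_local_power_to_one
    {Ω : Type*} [MeasurableSpace Ω] (Pr : Measure Ω) [IsProbabilityMeasure Pr]
    {k : ℕ} (Λ : Set (Fin k → ℝ)) (hΛ : MeasurableSet Λ) (hΛ1 : volume Λ = 1)
    (Z : (Fin k → ℝ) → Ω → ℝ)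
    (hZ_meas : Measurable (fun p : (Fin k → ℝ) × Ω => Z p.1 p.2))
    (c : (Fin k → ℝ) → ℝ) (hc_meas : Measurable c)
    (c₀ : ℝ) (hc₀ : 0 < c₀) (hc_lb : ∀ lam ∈ Λ, c₀ ≤ c lam)
    (q : ℝ) (hq : 0 < q) (α : ℝ) (hα : α ∈ Set.Ioo (0 : ℝ) 1) :
    (∀ᵐ ω ∂Pr,
      Tendsto (fun b : ℝ =>
          ∫ lam in Λ, (if q < (Z lam ω + c lam * b) ^ 2 then (1 : ℝ) else 0))
        atTop (nhds 1)) ∧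
    Tendsto (fun b : ℝ =>
        Pr {ω | α < ∫ lam in Λ, (if q < (Z lam ω + c lam * b) ^ 2 then (1 : ℝ) else 0)})
      atTop (nhds 1) := by
  haveI hprob : IsProbabilityMeasure (volume.restrict Λ) :=
    ⟨by rw [Measure.restrict_apply_univ]; exact hΛ1⟩
  -- pointwise (for every ω) convergence of the occupation time
  have key : ∀ ω : Ω, Tendsto (fun b : ℝ =>
      ∫ lam in Λ, (if q < (Z lam ω + c lam * b) ^ 2 then (1 : ℝ) else 0))
      atTop (nhds 1) := by
    intro ω
    have hZω : Measurable fun lam => Z lam ω :=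
      hZ_meas.comp (measurable_id.prodMk measurable_const)
    have hone : (∫ lam in Λ, (1 : ℝ)) = 1 := by
      simp
    rw [← hone]
    apply tendsto_integral_filter_of_dominated_convergence (fun _ => (1 : ℝ))
    · filter_upwards with b
      have hset : MeasurableSet {lam | q < (Z lam ω + c lam * b) ^ 2} :=
        measurableSet_lt measurable_const ((hZω.add (hc_meas.mul_const b)).pow_const 2)
      exact (Measurable.ite hset measurable_const measurable_const).aestronglyMeasurable
    · filter_upwards with b
      filter_upwards with lam
      split <;> simp
    · exact integrable_const 1
    · filter_upwards [ae_restrict_mem hΛ] with lam hlam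
      have hc : c₀ ≤ c lam := hc_lb lam hlam
      have h1 : Tendsto (fun b : ℝ => Z lam ω + c₀ * b) atTop atTop :=
        tendsto_atTop_add_const_left _ _ (Tendsto.const_mul_atTop hc₀ tendsto_id)
      have h2 : ∀ᶠ b in atTop, Real.sqrt q < Z lam ω + c₀ * b :=
        h1.eventually_gt_atTop _
      refine Tendsto.congr' ?_ tendsto_const_nhds
      filter_upwards [h2, eventually_ge_atTop (0 : ℝ)] with b hb hb0
      have hle : Z lam ω + c₀ * b ≤ Z lam ω + c lam * b := by
        have := mul_le_mul_of_nonneg_right hc hb0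
        linarith
      have hx : Real.sqrt q < Z lam ω + c lam * b := lt_of_lt_of_le hb hle
      have hqlt : q < (Z lam ω + c lam * b) ^ 2 := by
        have h0 : (0 : ℝ) ≤ Real.sqrt q := Real.sqrt_nonneg q
        calc q = Real.sqrt q ^ 2 := (Real.sq_sqrt hq.le).symm
          _ < (Z lam ω + c lam * b) ^ 2 := by
            exact pow_lt_pow_left₀ hx h0 two_ne_zero
      simp [hqlt]
  constructor
  · exact Filter.Eventually.of_forall key
  · -- measurability of the occupation time
    have hFmeas : ∀ b : ℝ, Measurable fun ω =>
        ∫ lam in Λ, (if q < (Z lam ω + c lam * b) ^ 2 then (1 : ℝ) else 0) := by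
      intro b
      have hjoint : StronglyMeasurable fun p : Ω × (Fin k → ℝ) =>
          (if q < (Z p.2 p.1 + c p.2 * b) ^ 2 then (1 : ℝ) else 0) := by
        have hm : Measurable fun p : Ω × (Fin k → ℝ) => Z p.2 p.1 + c p.2 * b := by
          exact (hZ_meas.comp measurable_swap).add ((hc_meas.comp measurable_snd).mul_const b)
        have hset : MeasurableSet {p : Ω × (Fin k → ℝ) | q < (Z p.2 p.1 + c p.2 * b) ^ 2} :=
          measurableSet_lt measurable_const (hm.pow_const 2)
        exact (Measurable.ite hset measurable_const measurable_const).stronglyMeasurable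
      exact hjoint.integral_prod_right'.measurable
    have hSmeas : ∀ b : ℝ, MeasurableSet {ω | α <
        ∫ lam in Λ, (if q < (Z lam ω + c lam * b) ^ 2 then (1 : ℝ) else 0)} := by
      intro b
      exact measurableSet_lt measurable_const (hFmeas b)
    set S : ℝ → Set Ω := fun b => {ω | α <
        ∫ lam in Λ, (if q < (Z lam ω + c lam * b) ^ 2 then (1 : ℝ) else 0)} with hS
    have hInd : Tendsto (fun b : ℝ => ∫ ω, (S b).indicator (1 : Ω → ℝ) ω ∂Pr)
        atTop (nhds 1) := by
      have hone : (∫ ω, (1 : ℝ) ∂Pr) = 1 := by simp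
      rw [← hone]
      apply tendsto_integral_filter_of_dominated_convergence (fun _ => (1 : ℝ))
      · filter_upwards with b
        exact ((measurable_const.indicator (hSmeas b))).aestronglyMeasurable
      · filter_upwards with b
        filter_upwards with ω
        by_cases h : ω ∈ S b <;> simp [Set.indicator_apply, h]
      · exact integrable_const 1
      · filter_upwards with ω
        have := key ω
        have hev : ∀ᶠ b in atTop, ω ∈ S b :=
          this.eventually_const_lt hα.2
        refine Tendsto.congr' ?_ tendsto_const_nhds
        filter_upwards [hev] with b hb
        simp [Set.indicator_apply, hb]
    have heq : ∀ b : ℝ, (∫ ω, (S b).indicator (1 : Ω → ℝ) ω ∂Pr) = (Pr (S b)).toReal := by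
      intro b
      rw [integral_indicator_one (hSmeas b)]
      rfl
    have hreal : Tendsto (fun b : ℝ => (Pr (S b)).toReal) atTop (nhds 1) := by
      refine hInd.congr fun b => heq b
    have hEN : Tendsto (fun b : ℝ => ENNReal.ofReal ((Pr (S b)).toReal)) atTop
        (nhds (ENNReal.ofReal 1)) := ENNReal.tendsto_ofReal hreal
    simp only [ENNReal.ofReal_one] at hEN
    refine hEN.congr fun b => ?_
    exact ENNReal.ofReal_toReal (measure_ne_top _ _)
end
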